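/- Let H be a simple graph on exactly s vertices with no isolated vertices. If H is an s-truss (every edge lies in at least s-2 triangles of H), then H is a complete graph on s vertices, i.e., an s-clique. -/
import Mathlib


variable {V : Type*} [Fintype V] [DecidableEq V]

def IsTriangle (H : SimpleGraph V) (t : Finset V) : Prop :=
  t.card = 3 ∧ ∀ a ∈ t, ∀ b ∈ t, a ≠ b → H.Adj a b

instance (H : SimpleGraph V) [DecidableRel H.Adj] (t : Finset V) :
    Decidable (IsTriangle H t) := by unfold IsTriangle; infer_instance

def edgeSupport (H : SimpleGraph V) [DecidableRel H.Adj] (u v : V) : ℕ :=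
  (Finset.univ.filter (fun t : Finset V => IsTriangle H t ∧ u ∈ t ∧ v ∈ t)).card

lemma key_adj (H : SimpleGraph V) [DecidableRel H.Adj] (s : ℕ)
    (hcard : Fintype.card V = s)
    (htruss : ∀ u v : V, H.Adj u v → s - 2 ≤ edgeSupport H u v)
    {u v w : V} (huv : H.Adj u v) (hwu : w ≠ u) (hwv : w ≠ v) :
    H.Adj u w := by
  classical
  set A : Finset V := Finset.univ.filter
    (fun x => x ≠ u ∧ x ≠ v ∧ H.Adj u x ∧ H.Adj v x) with hA
  set T : Finset (Finset V) :=
    Finset.univ.filter (fun t => IsTriangle H t ∧ u ∈ t ∧ v ∈ t) with hT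
  have huvne : u ≠ v := huv.ne
  have hTsub : T ⊆ A.image (fun x => ({u, v, x} : Finset V)) := by
    intro t ht
    simp only [hT, Finset.mem_filter, Finset.mem_univ, true_and] at ht
    obtain ⟨⟨hc3, hadj⟩, hu, hv⟩ := ht
    have hsub : ({u, v} : Finset V) ⊆ t := by
      intro x hx; simp only [Finset.mem_insert, Finset.mem_singleton] at hx
      rcases hx with rfl | rfl <;> assumption
    have hcd : (t \ {u, v}).card = 1 := by
      rw [Finset.card_sdiff_of_subset hsub, hc3,
        Finset.card_insert_of_notMem (by simp [huvne]), Finset.card_singleton]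
    obtain ⟨x, hx⟩ := Finset.card_eq_one.mp hcd
    have hxmem : x ∈ t \ ({u, v} : Finset V) := by rw [hx]; simp
    have hxt : x ∈ t := (Finset.mem_sdiff.mp hxmem).1
    have hxne : x ≠ u ∧ x ≠ v := by
      have := (Finset.mem_sdiff.mp hxmem).2
      simp only [Finset.mem_insert, Finset.mem_singleton] at this
      tauto
    refine Finset.mem_image.mpr ⟨x, ?_, ?_⟩
    · simp only [hA, Finset.mem_filter, Finset.mem_univ, true_and]
      exact ⟨hxne.1, hxne.2, hadj u hu x hxt (Ne.symm hxne.1),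
        hadj v hv x hxt (Ne.symm hxne.2)⟩
    · have heq : t = (t \ ({u, v} : Finset V)) ∪ {u, v} :=
        (Finset.sdiff_union_of_subset hsub).symm
      rw [heq, hx]
      ext y
      simp only [Finset.mem_union, Finset.mem_singleton, Finset.mem_insert]
      tauto
  have hcount : s - 2 ≤ A.card := by
    calc s - 2 ≤ T.card := htruss u v huv
      _ ≤ (A.image (fun x => ({u, v, x} : Finset V))).card :=
          Finset.card_le_card hTsub
      _ ≤ A.card := Finset.card_image_le
  have hBsub : A ⊆ Finset.univ.filter (fun x => x ≠ u ∧ x ≠ v) := by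
    intro x hx
    simp only [hA, Finset.mem_filter, Finset.mem_univ, true_and] at hx ⊢
    tauto
  have hBcard : (Finset.univ.filter (fun x => x ≠ u ∧ x ≠ v)).card = s - 2 := by
    have h1 : Finset.univ.filter (fun x => x ≠ u ∧ x ≠ v)
        = Finset.univ \ ({u, v} : Finset V) := by
      ext x; simp
    rw [h1, Finset.card_sdiff_of_subset (by simp), Finset.card_univ, hcard,
      Finset.card_insert_of_notMem (by simp [huvne]), Finset.card_singleton]
  have hAeq : A = Finset.univ.filter (fun x => x ≠ u ∧ x ≠ v) :=
    Finset.eq_of_subset_of_card_le hBsub (by rw [hBcard]; exact hcount)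
  have hw : w ∈ A := by rw [hAeq]; simp [hwu, hwv]
  simp only [hA, Finset.mem_filter, Finset.mem_univ, true_and] at hw
  tauto

/-- A simple graph on exactly `s` vertices with no isolated vertices which is an
`s`-truss is the complete graph on `s` vertices. -/
theorem stmt2 (H : SimpleGraph V) [DecidableRel H.Adj] (s : ℕ) (hs : 2 ≤ s)
    (hcard : Fintype.card V = s)
    (hiso : ∀ v : V, ∃ u, H.Adj v u)
    (htruss : ∀ u v : V, H.Adj u v → s - 2 ≤ edgeSupport H u v) :
    H = ⊤ := by
  ext x y
  simp only [SimpleGraph.top_adj]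
  constructor
  · exact fun h => h.ne
  · intro hxy
    obtain ⟨u, hu⟩ := hiso x
    rcases eq_or_ne u y with rfl | hne
    · exact hu
    · exact key_adj H s hcard htruss hu (Ne.symm hxy) (Ne.symm hne)
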